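/- Let f : ℝⁿ → ℝ be a C¹ function with f ≥ 0 and suppose there is ε > 0 with ‖∇f(x)‖² ≥ ε·f(x) for all x. Let γ : [0,∞) → ℝⁿ be a C¹ curve solving γ'(t) = −∇f(γ(t)). Then: (1) f(γ(t)) ≤ f(γ(0))·e^{−εt} for all t ≥ 0; and (2) the total length of γ is finite, with ∫₀^∞ ‖γ'(t)‖ dt ≤ C·√(f(γ(0))) where one may take C = (1 − e^{−ε})^{1/2} / (1 − e^{−ε/2}). -/

import Mathlib

open MeasureTheory

-- φ(s) = 2+s-(2-s)e^s ≥ 0 for s ≥ 0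
lemma phi_nonneg' (s : ℝ) (hs : 0 ≤ s) : 0 ≤ 2 + s - (2 - s) * Real.exp s := by
  set φ : ℝ → ℝ := fun s => 2 + s - (2 - s) * Real.exp s with hφ
  set φ' : ℝ → ℝ := fun s => 1 + (s - 1) * Real.exp s with hφ'
  have hdφ : ∀ x : ℝ, HasDerivAt φ (φ' x) x := by
    intro x
    have h1 : HasDerivAt (fun s : ℝ => (2 - s) * Real.exp s)
        ((-1) * Real.exp x + (2 - x) * Real.exp x) x :=
      (((hasDerivAt_id x).const_sub 2)).mul (Real.hasDerivAt_exp x)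
    have h2 := ((hasDerivAt_const x (2:ℝ)).add (hasDerivAt_id x)).sub h1
    refine h2.congr_deriv ?_
    simp [hφ']; ring
  have hdφ' : ∀ x : ℝ, HasDerivAt φ' (x * Real.exp x) x := by
    intro x
    have h1 : HasDerivAt (fun s : ℝ => (s - 1) * Real.exp s)
        (1 * Real.exp x + (x - 1) * Real.exp x) x :=
      (((hasDerivAt_id x).sub_const 1)).mul (Real.hasDerivAt_exp x)
    have h2 := (hasDerivAt_const x (1:ℝ)).add h1
    refine h2.congr_deriv ?_
    ring
  have hmono' : MonotoneOn φ' (Set.Ici 0) := by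
    apply monotoneOn_of_deriv_nonneg (convex_Ici 0)
      (fun x _ => (hdφ' x).continuousAt.continuousWithinAt)
      (fun x hx => (hdφ' x).differentiableAt.differentiableWithinAt)
    intro x hx
    rw [interior_Ici] at hx
    rw [(hdφ' x).deriv]
    have h1 := Real.exp_pos x
    have hx' : (0:ℝ) < x := hx
    nlinarith
  have hφ'0 : φ' 0 = 0 := by simp [hφ']
  have hmono : MonotoneOn φ (Set.Ici 0) := by
    apply monotoneOn_of_deriv_nonneg (convex_Ici 0)
      (fun x _ => (hdφ x).continuousAt.continuousWithinAt)
      (fun x hx => (hdφ x).differentiableAt.differentiableWithinAt)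
    intro x hx
    rw [interior_Ici] at hx
    rw [(hdφ x).deriv]
    have := hmono' Set.self_mem_Ici (Set.mem_Ici.2 hx.le) hx.le
    rw [hφ'0] at this
    exact this
  have := hmono Set.self_mem_Ici (Set.mem_Ici.2 hs) hs
  simpa [hφ] using this

lemma key_ineq' (ε : ℝ) (hε : 0 < ε) :
    2 / Real.sqrt ε ≤ Real.sqrt (1 - Real.exp (-ε)) / (1 - Real.exp (-ε / 2)) := by
  set s := ε / 2 with hs
  have hs0 : 0 < s := by positivity
  set q := Real.exp (-s) with hq
  have hq1 : q < 1 := by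
    rw [hq]; exact Real.exp_lt_one_iff.2 (by linarith)
  have hq0 : 0 < q := Real.exp_pos _
  -- from phi_nonneg: (2-s)e^s ≤ 2+s, so 2-s ≤ (2+s)q, so 2(1-q) ≤ s(1+q)
  have h1 : 2 * (1 - q) ≤ s * (1 + q) := by
    have := phi_nonneg' s hs0.le
    have he : Real.exp s * q = 1 := by
      rw [hq, ← Real.exp_add]; simp
    nlinarith [Real.exp_pos s]
  -- hence (2(1-q))^2 ≤ 2s(1-q^2) = ε(1-e^{-ε})
  have h2 : (2 * (1 - q))^2 ≤ ε * (1 - Real.exp (-ε)) := by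
    have hqq : Real.exp (-ε) = q ^ 2 := by
      rw [hq, sq, ← Real.exp_add, hs]; ring_nf
    rw [hqq]
    nlinarith
  have h3 : 2 * (1 - q) ≤ Real.sqrt ε * Real.sqrt (1 - Real.exp (-ε)) := by
    rw [← Real.sqrt_mul_self (by linarith : (0:ℝ) ≤ 2 * (1 - q)),
        ← Real.sqrt_mul hε.le]
    apply Real.sqrt_le_sqrt
    nlinarith
  have hsq : 0 < Real.sqrt ε := Real.sqrt_pos.2 hε
  have hqe : Real.exp (-ε/2) = q := by rw [hq, hs]; ring_nf
  rw [hqe, div_le_div_iff₀ hsq (by linarith : (0:ℝ) < 1 - q)]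
  linarith

theorem gradient_flow_exponential_decay_and_finite_length
    {n : ℕ} (f : EuclideanSpace ℝ (Fin n) → ℝ) (hf : ContDiff ℝ 1 f)
    (hf0 : ∀ x, 0 ≤ f x) (ε : ℝ) (hε : 0 < ε)
    (hsteep : ∀ x, ε * f x ≤ ‖gradient f x‖ ^ 2)
    (γ : ℝ → EuclideanSpace ℝ (Fin n))
    (hγ : ∀ t : ℝ, 0 ≤ t → HasDerivAt γ (-(gradient f (γ t))) t) :
    (∀ t : ℝ, 0 ≤ t → f (γ t) ≤ f (γ 0) * Real.exp (-ε * t)) ∧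
    (∫⁻ t in Set.Ioi (0 : ℝ), (‖gradient f (γ t)‖₊ : ENNReal)
      ≤ ENNReal.ofReal
          ((Real.sqrt (1 - Real.exp (-ε)) / (1 - Real.exp (-ε / 2)))
            * Real.sqrt (f (γ 0)))) := by
  have hd : ∀ t : ℝ, 0 ≤ t →
      HasDerivAt (fun t => f (γ t)) (-(‖gradient f (γ t)‖^2)) t := by
    intro t ht
    have h1 := (((hf.differentiable one_ne_zero).differentiableAt).hasGradientAt.hasFDerivAt).comp_hasDerivAt t (hγ t ht)
    refine h1.congr_deriv ?_
    rw [InnerProductSpace.toDual_apply_apply, inner_neg_right, real_inner_self_eq_norm_sq]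
  -- Part 1
  have part1 : ∀ t : ℝ, 0 ≤ t → f (γ t) ≤ f (γ 0) * Real.exp (-ε * t) := by
    set h : ℝ → ℝ := fun t => f (γ t) * Real.exp (ε * t) with hh
    have hdh : ∀ t : ℝ, 0 ≤ t →
        HasDerivAt h ((-(‖gradient f (γ t)‖^2)) * Real.exp (ε * t)
          + f (γ t) * (ε * Real.exp (ε * t))) t := by
      intro t ht
      have := (hd t ht).mul ((Real.hasDerivAt_exp (ε*t)).comp t ((hasDerivAt_id t).const_mul ε))
      exact this.congr_deriv (by simp only [Function.comp_apply]; ring)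
    have hcont : ContinuousOn h (Set.Ici 0) := fun t ht =>
      ((hdh t ht).continuousAt).continuousWithinAt
    have hanti : AntitoneOn h (Set.Ici 0) := by
      apply antitoneOn_of_deriv_nonpos (convex_Ici 0) hcont
      · intro t ht
        rw [interior_Ici] at ht
        exact (hdh t ht.le).differentiableAt.differentiableWithinAt
      · intro t ht
        rw [interior_Ici] at ht
        rw [(hdh t ht.le).deriv]
        have := hsteep (γ t)
        have he : 0 < Real.exp (ε * t) := Real.exp_pos _
        nlinarith
    intro t ht
    have h0 := hanti Set.self_mem_Ici ht ht
    simp only [hh, mul_zero, Real.exp_zero, mul_one] at h0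
    have he : 0 < Real.exp (ε * t) := Real.exp_pos _
    rw [neg_mul, Real.exp_neg]
    calc f (γ t) = (f (γ t) * Real.exp (ε * t)) * (Real.exp (ε * t))⁻¹ := by
          field_simp
      _ ≤ f (γ 0) * (Real.exp (ε * t))⁻¹ :=
          mul_le_mul_of_nonneg_right h0 (by positivity)
  refine ⟨part1, ?_⟩
  -- Part 2
  set g0 := f (γ 0) with hg0
  have hg00 : 0 ≤ g0 := hf0 _
  have hgradc : Continuous (fun x => gradient f x) :=
    (InnerProductSpace.toDual ℝ _).symm.continuous.comp (hf.continuous_fderiv one_ne_zero)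
  set G : ℝ → ℝ := fun t => ‖gradient f (γ t)‖ with hG
  -- continuity of everything on [0, m]
  have hγcont : ∀ t : ℝ, 0 ≤ t → ContinuousAt γ t := fun t ht => (hγ t ht).continuousAt
  have hGcont : ∀ t : ℝ, 0 ≤ t → ContinuousAt G t := fun t ht =>
    (hgradc.continuousAt.comp (hγcont t ht)).norm
  have hfγcont : ∀ t : ℝ, 0 ≤ t → ContinuousAt (fun t => f (γ t)) t := fun t ht =>
    hf.continuous.continuousAt.comp (hγcont t ht)
  -- integral of exponential
  have intE : ∀ m : ℝ, 0 ≤ m →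
      ∫ t in (0:ℝ)..m, Real.exp (-(ε/2) * t) = (2/ε) * (1 - Real.exp (-(ε/2)*m)) := by
    intro m hm
    have hA : ∀ x : ℝ, HasDerivAt (fun t => -(2/ε) * Real.exp (-(ε/2)*t))
        (Real.exp (-(ε/2)*x)) x := by
      intro x
      have h1 := ((Real.hasDerivAt_exp (-(ε/2)*x)).comp x ((hasDerivAt_id x).const_mul (-(ε/2)))).const_mul (-(2/ε))
      refine h1.congr_deriv ?_
      field_simp
    rw [intervalIntegral.integral_eq_sub_of_hasDerivAt (fun x _ => hA x)
      (((Real.continuous_exp.comp (continuous_const.mul continuous_id))).intervalIntegrable 0 m)]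
    simp
    ring
  have intEle : ∀ m : ℝ, 0 ≤ m → ∫ t in (0:ℝ)..m, Real.exp (-(ε/2) * t) ≤ 2/ε := by
    intro m hm
    rw [intE m hm]
    have : 0 < Real.exp (-(ε/2)*m) := Real.exp_pos _
    have h2 : (0:ℝ) < 2/ε := by positivity
    nlinarith
  -- energy estimate: ∫_0^m e^{εt/2} G² ≤ 2 g0
  have intK : ∀ m : ℝ, 0 ≤ m →
      ∫ t in (0:ℝ)..m, Real.exp ((ε/2) * t) * G t ^ 2 ≤ 2 * g0 := by
    intro m hm
    set D : ℝ → ℝ := fun t => Real.exp ((ε/2)*t) * G t ^ 2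
      - (ε/2) * (Real.exp ((ε/2)*t) * f (γ t)) with hD
    have hdF : ∀ t : ℝ, 0 ≤ t →
        HasDerivAt (fun t => -(Real.exp ((ε/2)*t) * f (γ t))) (D t) t := by
      intro t ht
      have he : HasDerivAt (fun t : ℝ => Real.exp ((ε/2)*t)) ((ε/2) * Real.exp ((ε/2)*t)) t := by
        have h1 := (Real.hasDerivAt_exp ((ε/2)*t)).comp t ((hasDerivAt_id t).const_mul (ε/2))
        simpa [Function.comp_def, mul_comm] using h1
      have h2 := (he.mul (hd t ht)).neg
      refine h2.congr_deriv ?_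
      simp [hD]
      ring
    have hDcont : ContinuousOn D (Set.Icc 0 m) := by
      intro t ht
      have h1 : ContinuousAt D t := by
        rw [hD]
        have hg := hGcont t ht.1
        have hfg := hfγcont t ht.1
        have hc : Continuous (fun t : ℝ => Real.exp ((ε/2)*t)) :=
          Real.continuous_exp.comp (continuous_const.mul continuous_id)
        exact (hc.continuousAt.mul (hg.pow 2)).sub
          (continuousAt_const.mul (hc.continuousAt.mul hfg))
      exact h1.continuousWithinAt
    have hDint : IntervalIntegrable D volume 0 m := by
      rw [intervalIntegrable_iff_integrableOn_Icc_of_le hm]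
      exact hDcont.integrableOn_Icc
    have hftc := intervalIntegral.integral_eq_sub_of_hasDerivAt
      (f := fun t => -(Real.exp ((ε/2)*t) * f (γ t))) (f' := D)
      (fun x hx => hdF x (by rw [Set.uIcc_of_le hm] at hx; exact hx.1)) hDint
    have hDle : ∫ t in (0:ℝ)..m, D t ≤ g0 := by
      rw [hftc]
      have hpos : 0 ≤ Real.exp ((ε/2)*m) * f (γ m) :=
        mul_nonneg (Real.exp_pos _).le (hf0 _)
      rw [hg0]
      simp only [mul_zero, Real.exp_zero, one_mul]
      linarith
    -- ∫ (ε/2) e f ≤ g0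
    have hf_int : IntervalIntegrable (fun t => (ε/2) * (Real.exp ((ε/2)*t) * f (γ t))) volume 0 m := by
      rw [intervalIntegrable_iff_integrableOn_Icc_of_le hm]
      apply ContinuousOn.integrableOn_Icc
      intro t ht
      have hfg := hfγcont t ht.1
      have hc : Continuous (fun t : ℝ => Real.exp ((ε/2)*t)) :=
        Real.continuous_exp.comp (continuous_const.mul continuous_id)
      exact ContinuousAt.continuousWithinAt
        (continuousAt_const.mul (hc.continuousAt.mul hfg))
    have hsecond : ∫ t in (0:ℝ)..m, (ε/2) * (Real.exp ((ε/2)*t) * f (γ t)) ≤ g0 := by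
      have hmono : ∫ t in (0:ℝ)..m, (ε/2) * (Real.exp ((ε/2)*t) * f (γ t))
          ≤ ∫ t in (0:ℝ)..m, (ε/2) * g0 * Real.exp (-(ε/2)*t) := by
        apply intervalIntegral.integral_mono_on hm hf_int
        · apply IntervalIntegrable.const_mul
          exact ((Real.continuous_exp.comp (continuous_const.mul continuous_id))).intervalIntegrable 0 m
        · intro t ht
          have hb := part1 t ht.1
          have he1 : Real.exp ((ε/2)*t) * Real.exp (-ε*t) = Real.exp (-(ε/2)*t) := by
            rw [← Real.exp_add]; ring_nf
          have hep : 0 < Real.exp ((ε/2)*t) := Real.exp_pos _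
          calc (ε/2) * (Real.exp ((ε/2)*t) * f (γ t))
              ≤ (ε/2) * (Real.exp ((ε/2)*t) * (g0 * Real.exp (-ε*t))) := by
                apply mul_le_mul_of_nonneg_left _ (by positivity)
                exact mul_le_mul_of_nonneg_left hb hep.le
            _ = (ε/2) * g0 * Real.exp (-(ε/2)*t) := by rw [← he1]; ring
      have := intEle m hm
      calc ∫ t in (0:ℝ)..m, (ε/2) * (Real.exp ((ε/2)*t) * f (γ t))
          ≤ ∫ t in (0:ℝ)..m, (ε/2) * g0 * Real.exp (-(ε/2)*t) := hmono
        _ = (ε/2) * g0 * ∫ t in (0:ℝ)..m, Real.exp (-(ε/2)*t) :=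
            intervalIntegral.integral_const_mul _ _
        _ ≤ (ε/2) * g0 * (2/ε) := by
            apply mul_le_mul_of_nonneg_left this (by positivity)
        _ = g0 := by field_simp
    have hsplit : (fun t => Real.exp ((ε/2) * t) * G t ^ 2)
        = fun t => D t + (ε/2) * (Real.exp ((ε/2)*t) * f (γ t)) := by
      funext t; rw [hD]; ring
    rw [hsplit, intervalIntegral.integral_add hDint hf_int]
    linarith
  -- AM-GM bound: ∫_0^m G ≤ a/ε + g0/a for any a > 0
  have hGint : ∀ m : ℝ, 0 ≤ m → IntervalIntegrable G volume 0 m := by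
    intro m hm
    rw [intervalIntegrable_iff_integrableOn_Icc_of_le hm]
    apply ContinuousOn.integrableOn_Icc
    intro t ht
    exact (hGcont t ht.1).continuousWithinAt
  have intM : ∀ m : ℝ, 0 ≤ m → ∀ a : ℝ, 0 < a →
      ∫ t in (0:ℝ)..m, G t ≤ a/ε + g0/a := by
    intro m hm a ha
    have hint2 : IntervalIntegrable
        (fun t => (a * Real.exp (-(ε/2)*t) + Real.exp ((ε/2)*t) * G t ^ 2 / a) / 2) volume 0 m := by
      rw [intervalIntegrable_iff_integrableOn_Icc_of_le hm]
      apply ContinuousOn.integrableOn_Icc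
      intro t ht
      have hg := hGcont t ht.1
      have hc : Continuous (fun t : ℝ => Real.exp ((ε/2)*t)) :=
        Real.continuous_exp.comp (continuous_const.mul continuous_id)
      have hc2 : Continuous (fun t : ℝ => Real.exp (-(ε/2)*t)) :=
        Real.continuous_exp.comp (continuous_const.mul continuous_id)
      exact ContinuousAt.continuousWithinAt
        (((continuousAt_const.mul hc2.continuousAt).add
          ((hc.continuousAt.mul (hg.pow 2)).div_const a)).div_const 2)
    have hmono : ∫ t in (0:ℝ)..m, G t
        ≤ ∫ t in (0:ℝ)..m, (a * Real.exp (-(ε/2)*t) + Real.exp ((ε/2)*t) * G t ^ 2 / a) / 2 := by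
      apply intervalIntegral.integral_mono_on hm (hGint m hm) hint2
      intro t ht
      have hE : 0 < Real.exp ((ε/2)*t) := Real.exp_pos _
      have hE' : Real.exp ((ε/2)*t) * Real.exp (-(ε/2)*t) = 1 := by
        rw [← Real.exp_add]; ring_nf; exact Real.exp_zero
      have hGt : 0 ≤ G t := norm_nonneg _
      have hsq := sq_nonneg (Real.exp ((ε/2)*t) * G t - a)
      have hkey : (a * Real.exp (-(ε/2)*t) + Real.exp ((ε/2)*t) * G t ^ 2 / a)/2 - G t
          = (Real.exp ((ε/2)*t) * G t - a)^2 / (2 * a * Real.exp ((ε/2)*t)) := by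
        have hEinv : Real.exp (-(ε/2)*t) = (Real.exp ((ε/2)*t))⁻¹ := by
          rw [← Real.exp_neg]; ring_nf
        rw [hEinv]
        field_simp
        ring
      have hpos : 0 ≤ (Real.exp ((ε/2)*t) * G t - a)^2 / (2 * a * Real.exp ((ε/2)*t)) := by
        positivity
      linarith [hkey ▸ hpos]
    have heq : ∫ t in (0:ℝ)..m, (a * Real.exp (-(ε/2)*t) + Real.exp ((ε/2)*t) * G t ^ 2 / a) / 2
        = (a/2) * (∫ t in (0:ℝ)..m, Real.exp (-(ε/2)*t))
          + (1/(2*a)) * ∫ t in (0:ℝ)..m, Real.exp ((ε/2)*t) * G t ^ 2 := by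
      rw [← intervalIntegral.integral_const_mul, ← intervalIntegral.integral_const_mul,
          ← intervalIntegral.integral_add]
      · congr 1; funext t; ring
      · apply IntervalIntegrable.const_mul
        exact ((Real.continuous_exp.comp (continuous_const.mul continuous_id))).intervalIntegrable 0 m
      · apply IntervalIntegrable.const_mul
        rw [intervalIntegrable_iff_integrableOn_Icc_of_le hm]
        apply ContinuousOn.integrableOn_Icc
        intro t ht
        have hg := hGcont t ht.1
        have hc : Continuous (fun t : ℝ => Real.exp ((ε/2)*t)) :=
          Real.continuous_exp.comp (continuous_const.mul continuous_id)
        exact ContinuousAt.continuousWithinAt (hc.continuousAt.mul (hg.pow 2))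
    calc ∫ t in (0:ℝ)..m, G t
        ≤ (a/2) * (∫ t in (0:ℝ)..m, Real.exp (-(ε/2)*t))
          + (1/(2*a)) * ∫ t in (0:ℝ)..m, Real.exp ((ε/2)*t) * G t ^ 2 := by
          rw [← heq]; exact hmono
      _ ≤ (a/2) * (2/ε) + (1/(2*a)) * (2*g0) := by
          apply add_le_add
          · exact mul_le_mul_of_nonneg_left (intEle m hm) (by positivity)
          · exact mul_le_mul_of_nonneg_left (intK m hm) (by positivity)
      _ = a/ε + g0/a := by field_simp
  -- optimized bound
  have intN : ∀ m : ℝ, 0 ≤ m →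
      ∫ t in (0:ℝ)..m, G t ≤ (2 / Real.sqrt ε) * Real.sqrt g0 := by
    intro m hm
    rcases eq_or_lt_of_le hg00 with h0 | h0
    · have : Real.sqrt g0 = 0 := by rw [← h0, Real.sqrt_zero]
      rw [this, mul_zero]
      apply le_of_forall_pos_le_add
      intro δ hδ
      have := intM m hm (δ*ε) (by positivity)
      rw [← h0] at this
      calc ∫ t in (0:ℝ)..m, G t ≤ δ*ε/ε + 0/(δ*ε) := this
        _ ≤ 0 + δ := by rw [zero_div]; field_simp; linarith
    · have ha : 0 < Real.sqrt (ε * g0) := Real.sqrt_pos.2 (by positivity)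
      have h1 : Real.sqrt (ε * g0) = Real.sqrt ε * Real.sqrt g0 := Real.sqrt_mul hε.le _
      have hse : Real.sqrt ε * Real.sqrt ε = ε := Real.mul_self_sqrt hε.le
      have hsg : Real.sqrt g0 * Real.sqrt g0 = g0 := Real.mul_self_sqrt hg00
      have hsε : 0 < Real.sqrt ε := Real.sqrt_pos.2 hε
      have hsg0 : 0 < Real.sqrt g0 := Real.sqrt_pos.2 h0
      have := intM m hm (Real.sqrt (ε * g0)) ha
      have e1 : Real.sqrt (ε * g0)/ε = Real.sqrt g0/Real.sqrt ε := by
        rw [h1, div_eq_div_iff hε.ne' hsε.ne']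
        linear_combination Real.sqrt g0 * hse
      have e2 : g0/Real.sqrt (ε * g0) = Real.sqrt g0/Real.sqrt ε := by
        rw [h1, div_eq_div_iff (by positivity) hsε.ne']
        linear_combination (-Real.sqrt ε) * hsg
      have heq : Real.sqrt (ε * g0)/ε + g0/Real.sqrt (ε * g0)
          = (2 / Real.sqrt ε) * Real.sqrt g0 := by
        rw [e1, e2]; ring
      linarith [heq ▸ this]
  -- convert to lintegral
  set H : ℝ → ENNReal := fun t => (‖gradient f (γ (max t 0))‖₊ : ENNReal) with hH
  have hHrc : Continuous (fun t => ‖gradient f (γ (max t 0))‖) := by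
    apply Continuous.norm
    apply hgradc.comp
    rw [continuous_iff_continuousAt]
    intro t
    show ContinuousAt (γ ∘ fun t => max t 0) t
    exact ContinuousAt.comp (hγcont (max t 0) (le_max_right _ _))
      ((continuous_id.max continuous_const).continuousAt)
  have hHm : Measurable H := by
    have hEq : H = fun t => ENNReal.ofReal ‖gradient f (γ (max t 0))‖ := by
      funext t
      rw [hH]
      exact (ofReal_norm _).symm
    rw [hEq]
    exact ENNReal.measurable_ofReal.comp hHrc.measurable
  have hstep1 : ∫⁻ t in Set.Ioi (0:ℝ), (‖gradient f (γ t)‖₊ : ENNReal)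
      = ∫⁻ t in Set.Ioi (0:ℝ), H t := by
    apply setLIntegral_congr_fun measurableSet_Ioi
    intro t ht
    simp only [hH, max_eq_left (le_of_lt (Set.mem_Ioi.1 ht))]
  rw [hstep1]
  have hstep2 : ∫⁻ t in Set.Ioi (0:ℝ), H t
      = ⨆ k : ℕ, ∫⁻ t in Set.Ioc (0:ℝ) k, H t := by
    rw [← lintegral_indicator measurableSet_Ioi]
    have hsup : (Set.Ioi (0:ℝ)).indicator H
        = fun t => ⨆ k : ℕ, (Set.Ioc (0:ℝ) (k:ℝ)).indicator H t := by
      funext t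
      rcases le_or_gt t 0 with ht | ht
      · simp [Set.indicator_apply, not_lt.2 ht, fun k => (by intro h; exact absurd h.1 (not_lt.2 ht) : t ∉ Set.Ioc (0:ℝ) (k:ℝ))]
      · obtain ⟨k, hk⟩ := exists_nat_ge t
        apply le_antisymm
        · rw [Set.indicator_of_mem (Set.mem_Ioi.2 ht)]
          calc H t = (Set.Ioc (0:ℝ) (k:ℝ)).indicator H t := by
                rw [Set.indicator_of_mem (Set.mem_Ioc.2 ⟨ht, hk⟩)]
            _ ≤ _ := le_iSup (fun k : ℕ => (Set.Ioc (0:ℝ) (k:ℝ)).indicator H t) k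
        · apply iSup_le
          intro j
          apply le_trans (Set.indicator_le_indicator_of_subset Set.Ioc_subset_Ioi_self (fun _ => zero_le) t)
          exact le_rfl
    rw [hsup, lintegral_iSup]
    · congr 1
      funext k
      rw [lintegral_indicator measurableSet_Ioc]
    · exact fun k => hHm.indicator measurableSet_Ioc
    · intro i j hij t
      exact Set.indicator_le_indicator_of_subset
        (Set.Ioc_subset_Ioc_right (by exact_mod_cast hij)) (fun _ => zero_le) t
  rw [hstep2]
  apply iSup_le
  intro k
  have hk0 : (0:ℝ) ≤ (k:ℝ) := Nat.cast_nonneg k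
  have hint : IntegrableOn (fun t => ‖gradient f (γ (max t 0))‖) (Set.Ioc (0:ℝ) k) volume :=
    (hHrc.integrableOn_Icc).mono_set Set.Ioc_subset_Icc_self
  have heq1 : ∫⁻ t in Set.Ioc (0:ℝ) k, H t
      = ENNReal.ofReal (∫ t in Set.Ioc (0:ℝ) k, ‖gradient f (γ (max t 0))‖) := by
    have := MeasureTheory.lintegral_coe_eq_integral
      (fun t => ‖gradient f (γ (max t 0))‖₊)
      (μ := volume.restrict (Set.Ioc (0:ℝ) k)) (by simpa [coe_nnnorm, IntegrableOn] using hint)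
    rw [hH, this]
    congr 1
  rw [heq1]
  apply ENNReal.ofReal_le_ofReal
  have heq2 : ∫ t in Set.Ioc (0:ℝ) k, ‖gradient f (γ (max t 0))‖
      = ∫ t in (0:ℝ)..k, G t := by
    rw [intervalIntegral.integral_of_le hk0]
    apply setIntegral_congr_fun measurableSet_Ioc
    intro t ht
    simp [hG, max_eq_left ht.1.le]
  rw [heq2]
  calc ∫ t in (0:ℝ)..k, G t ≤ (2 / Real.sqrt ε) * Real.sqrt g0 := intN k hk0
    _ ≤ (Real.sqrt (1 - Real.exp (-ε)) / (1 - Real.exp (-ε / 2))) * Real.sqrt g0 :=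
        mul_le_mul_of_nonneg_right (key_ineq' ε hε) (Real.sqrt_nonneg _)
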